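/- Let Q ∈ 𝒬_2^m be a binary form of degree m ≥ 3 with Δ(Q) ≠ 0 and associated form 𝐐 ∈ 𝒬_2^{2(m-2)}. Then Cat(𝐐) ≠ 0, where Cat denotes the catalecticant of a binary form of even degree 2(m−2). -/

import Mathlib

open MvPolynomial

set_option synthInstance.maxHeartbeats 400000
set_option maxHeartbeats 1000000

/-- The Jacobian ideal `J(Q)`, generated by the first-order partial derivatives of `Q`. -/
noncomputable def jacobianIdeal {n : ℕ} (Q : MvPolynomial (Fin n) ℂ) :
    Ideal (MvPolynomial (Fin n) ℂ) :=
  Ideal.span (Set.range fun i => pderiv i Q)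

/-- A form `Q` is non-degenerate (`Δ(Q) ≠ 0`): its partial derivatives have no common
zero away from the origin. -/
def Nondegenerate {n : ℕ} (Q : MvPolynomial (Fin n) ℂ) : Prop :=
  ∀ z : Fin n → ℂ, (∀ i, eval z (pderiv i Q) = 0) → z = 0

/-- The Hessian `Hess(Q) = det(∂²Q/∂zᵢ∂zⱼ)`. -/
noncomputable def hess {n : ℕ} (Q : MvPolynomial (Fin n) ℂ) : MvPolynomial (Fin n) ℂ :=
  (Matrix.of fun i j => pderiv i (pderiv j Q)).det

/-- Apply a linear functional `ρ : A → ℂ` coefficientwise to a polynomial with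
coefficients in `A`. -/
noncomputable def coeffMap {n : ℕ} {A : Type*} [CommRing A]
    (ρ : A → ℂ) (p : MvPolynomial (Fin n) A) : MvPolynomial (Fin n) ℂ :=
  ∑ d ∈ p.support, monomial d (ρ (p.coeff d))

/-- `A` is the associated form of `Q ∈ 𝒬_n^m`: there is a linear functional `ω` on the
Milnor algebra `M(Q) = ℂ[z]/J(Q)` sending the class of `Hess(Q)` to `1` and vanishing on
classes of forms of degree `< n(m-2)`, such that
`A(z) = ω((z_1 e_1 + ⋯ + z_n e_n)^{n(m-2)})`, where `e_i` is the class of `z_i`. -/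
def IsAssocForm (n m : ℕ) (Q A : MvPolynomial (Fin n) ℂ) : Prop :=
  ∃ ω : (MvPolynomial (Fin n) ℂ ⧸ jacobianIdeal Q) →ₗ[ℂ] ℂ,
    ω (Ideal.Quotient.mk (jacobianIdeal Q) (hess Q)) = 1 ∧
    (∀ j : ℕ, j < n * (m - 2) → ∀ p : MvPolynomial (Fin n) ℂ, p.IsHomogeneous j →
      ω (Ideal.Quotient.mk (jacobianIdeal Q) p) = 0) ∧
    A = coeffMap (fun a => ω a)
      ((∑ i, MvPolynomial.C (Ideal.Quotient.mk (jacobianIdeal Q) (X i)) * X i)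
        ^ (n * (m - 2)))

/-- The catalecticant of a binary form of even degree `2N`:
writing `R = Σ_j C(2N,j) a_j z₁^{2N-j} z₂^j`, it is the determinant of the Hankel
matrix `(a_{i+j})_{0 ≤ i,j ≤ N}`. -/
noncomputable def catalecticant (N : ℕ) (R : MvPolynomial (Fin 2) ℂ) : ℂ :=
  (Matrix.of fun i j : Fin (N + 1) =>
    R.coeff (Finsupp.single 0 (2 * N - (i.1 + j.1)) + Finsupp.single 1 (i.1 + j.1)) /
      (Nat.choose (2 * N) (i.1 + j.1) : ℂ)).det

namespace CatAux

abbrev P2 := MvPolynomial (Fin 2) ℂ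

/-- the exponent finsupp of `x^a y^b`. -/
noncomputable def sgl (a b : ℕ) : Fin 2 →₀ ℕ := Finsupp.single 0 a + Finsupp.single 1 b

@[simp] lemma sgl_apply0 (a b : ℕ) : sgl a b 0 = a := by simp [sgl]
@[simp] lemma sgl_apply1 (a b : ℕ) : sgl a b 1 = b := by
  simp [sgl, Finsupp.single_apply]

lemma fin2_ext {u v : Fin 2 →₀ ℕ} (h0 : u 0 = v 0) (h1 : u 1 = v 1) : u = v := by
  ext i
  fin_cases i <;> assumption

lemma eq_sgl (u : Fin 2 →₀ ℕ) : u = sgl (u 0) (u 1) := fin2_ext (by simp) (by simp)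

lemma sgl_inj {a b a' b' : ℕ} (h : sgl a b = sgl a' b') : a = a' ∧ b = b' := by
  constructor
  · have := congrArg (fun u : Fin 2 →₀ ℕ => u 0) h; simpa using this
  · have := congrArg (fun u : Fin 2 →₀ ℕ => u 1) h; simpa using this

lemma fin2_degree (u : Fin 2 →₀ ℕ) : u.degree = u 0 + u 1 := by
  rw [Finsupp.degree_apply, Finset.sum_subset (Finset.subset_univ u.support)]
  · simp [Fin.sum_univ_two]
  · intro i _ h
    simpa using Finsupp.notMem_support_iff.mp h

@[simp] lemma sgl_degree (a b : ℕ) : (sgl a b).degree = a + b := by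
  rw [fin2_degree]; simp

lemma isHomogeneous_fin2 {p : P2} {n : ℕ} :
    p.IsHomogeneous n ↔ ∀ u : Fin 2 →₀ ℕ, coeff u p ≠ 0 → u 0 + u 1 = n := by
  constructor
  · intro hp u hu
    rw [← fin2_degree]
    by_contra h
    exact hu (hp.coeff_eq_zero h)
  · intro h u hu
    have h2 := h u hu
    rw [← fin2_degree, Finsupp.degree_eq_weight_one] at h2
    exact h2

lemma sgl_add (a b a' b' : ℕ) : sgl a b + sgl a' b' = sgl (a + a') (b + b') :=
  fin2_ext (by simp) (by simp)

lemma isHomogeneous_sgl (a b c : ℕ) (r : ℂ) (h : a + b = c) :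
    (monomial (sgl a b) r : P2).IsHomogeneous c :=
  isHomogeneous_monomial _ (by simp [h])

/-- decomposition of a homogeneous binary form into monomials -/
lemma homog_decomp {p : P2} {d : ℕ} (hp : p.IsHomogeneous d) :
    p = ∑ j ∈ Finset.range (d + 1), monomial (sgl (d - j) j) (coeff (sgl (d - j) j) p) := by
  apply MvPolynomial.ext
  intro u
  rw [coeff_sum]
  simp_rw [coeff_monomial]
  by_cases hu : u 0 + u 1 = d
  · rw [Finset.sum_eq_single (u 1)]
    · have hu0 : d - u 1 = u 0 := by omega
      rw [hu0, ← eq_sgl u, if_pos rfl]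
    · intro j _ hj
      rw [if_neg]
      intro h
      have := congrArg (fun w : Fin 2 →₀ ℕ => w 1) h
      simp only [sgl_apply1] at this
      exact hj this
    · intro h
      exact absurd (Finset.mem_range.mpr (by omega)) h
  · have hc : coeff u p = 0 := hp.coeff_eq_zero (by rw [fin2_degree]; exact hu)
    rw [hc]
    symm
    apply Finset.sum_eq_zero
    intro j hj
    rw [if_neg]
    intro h
    have h1 := congrArg (fun w : Fin 2 →₀ ℕ => w 1) h
    have h0 := congrArg (fun w : Fin 2 →₀ ℕ => w 0) h
    simp only [sgl_apply0, sgl_apply1] at h0 h1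
    simp only [Finset.mem_range] at hj
    omega

lemma eq_zero_of_two_degrees {p : P2} {a b : ℕ} (ha : p.IsHomogeneous a)
    (hb : p.IsHomogeneous b) (hab : a ≠ b) : p = 0 := by
  rw [MvPolynomial.eq_zero_iff]
  intro u
  by_contra h
  exact hab ((isHomogeneous_fin2.mp ha u h).symm.trans (isHomogeneous_fin2.mp hb u h))

lemma pderiv_isHomogeneous {p : P2} {d : ℕ} (hp : p.IsHomogeneous d) (i : Fin 2) :
    (pderiv i p).IsHomogeneous (d - 1) := by
  have hsum := p.support_sum_monomial_coeff
  rw [← hsum, map_sum]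
  apply IsHomogeneous.sum
  intro u hu
  rw [pderiv_monomial]
  by_cases h : u i = 0
  · rw [h]; simp only [mul_zero, Nat.cast_zero, monomial_zero]
    exact isHomogeneous_zero _ _ _
  · apply isHomogeneous_monomial
    have hd : u 0 + u 1 = d :=
      isHomogeneous_fin2.mp hp u (MvPolynomial.mem_support_iff.mp hu)
    rw [fin2_degree, Finsupp.tsub_apply, Finsupp.tsub_apply]
    fin_cases i <;> simp only [Finsupp.single_apply] at h ⊢ <;> simp at h ⊢ <;> omega

/-- dehomogenization `x ↦ t`, `y ↦ 1` -/
noncomputable def φ : P2 →ₐ[ℂ] Polynomial ℂ :=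
  MvPolynomial.aeval ![Polynomial.X, 1]

lemma φ_monomial (u : Fin 2 →₀ ℕ) (c : ℂ) :
    φ (monomial u c) = Polynomial.C c * Polynomial.X ^ (u 0) := by
  rw [φ, aeval_monomial]
  rw [Finsupp.prod_fintype _ _ (fun i => pow_zero _)]
  simp [Fin.prod_univ_two]

lemma φ_eval (p : P2) (r : ℂ) : (φ p).eval r = eval ![r, 1] p := by
  have h : (Polynomial.aeval r).comp φ = MvPolynomial.aeval ![r, 1] := by
    apply MvPolynomial.algHom_ext
    intro i
    fin_cases i <;> simp [φ]
  have h2 : (Polynomial.aeval r) (φ p) = MvPolynomial.aeval ![r, 1] p := by rw [← h]; rfl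
  rw [← Polynomial.coe_aeval_eq_eval]
  have h3 : MvPolynomial.aeval ![r, (1:ℂ)] p = MvPolynomial.eval ![r, 1] p := by
    rw [← MvPolynomial.coe_aeval_eq_eval]; rfl
  rw [h2, h3]

lemma φ_coeff {p : P2} {d : ℕ} (hp : p.IsHomogeneous d) (j : ℕ) (hj : j ≤ d) :
    (φ p).coeff (d - j) = coeff (sgl (d - j) j) p := by
  conv_lhs => rw [homog_decomp hp]
  rw [map_sum, Polynomial.finset_sum_coeff]
  rw [Finset.sum_eq_single j]
  · rw [φ_monomial, sgl_apply0, Polynomial.coeff_C_mul, Polynomial.coeff_X_pow, if_pos rfl,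
      mul_one]
  · intro b hb hbj
    have hb' : b ≤ d := by
      have := Finset.mem_range.mp hb; omega
    rw [φ_monomial, sgl_apply0, Polynomial.coeff_C_mul, Polynomial.coeff_X_pow,
      if_neg (by omega), mul_zero]
  · intro hj'
    exact absurd (Finset.mem_range.mpr (by omega)) hj'

lemma φ_natDegree {p : P2} {d : ℕ} (hp : p.IsHomogeneous d) : (φ p).natDegree ≤ d := by
  conv_lhs => rw [homog_decomp hp]
  rw [map_sum]
  apply Polynomial.natDegree_sum_le_of_forall_le
  intro j hj
  rw [φ_monomial, sgl_apply0]
  refine le_trans (Polynomial.natDegree_C_mul_le _ _) ?_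
  rw [Polynomial.natDegree_X_pow]
  have := Finset.mem_range.mp hj; omega

lemma φ_eq_zero {p : P2} {d : ℕ} (hp : p.IsHomogeneous d) (h : φ p = 0) : p = 0 := by
  rw [homog_decomp hp]
  apply Finset.sum_eq_zero
  intro j hj
  have hj' : j ≤ d := by have := Finset.mem_range.mp hj; omega
  have hc := φ_coeff hp j hj'
  rw [h, Polynomial.coeff_zero] at hc
  rw [← hc]
  simp

lemma φ_coeff_top {p : P2} {d : ℕ} (hp : p.IsHomogeneous d) :
    (φ p).coeff d = eval ![1, 0] p := by
  have h0 := φ_coeff hp 0 (Nat.zero_le d)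
  rw [Nat.sub_zero] at h0
  rw [h0]
  conv_rhs => rw [homog_decomp hp]
  rw [map_sum]
  rw [Finset.sum_eq_single 0]
  · rw [eval_monomial, Finsupp.prod_fintype _ _ (fun i => pow_zero _)]
    simp [Fin.prod_univ_two, sgl_apply0, sgl_apply1]
  · intro j _ hj
    rw [eval_monomial, Finsupp.prod_fintype _ _ (fun i => pow_zero _)]
    simp [Fin.prod_univ_two, sgl_apply0, sgl_apply1, Matrix.cons_val_one]
    exact Or.inr hj
  · intro h
    exact absurd (Finset.mem_range.mpr (by omega)) h

lemma exists_nontrivial_zero {g : P2} {d : ℕ} (hg : g.IsHomogeneous (d + 1)) :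
    ∃ z : Fin 2 → ℂ, z ≠ 0 ∧ eval z g = 0 := by
  by_cases h : eval ![1, 0] g = 0
  · refine ⟨![1, 0], ?_, h⟩
    intro hz
    have := congrFun hz 0
    simp at this
  · have hc : (φ g).coeff (d + 1) ≠ 0 := by rw [φ_coeff_top hg]; exact h
    have hne : φ g ≠ 0 := fun h0 => hc (by rw [h0]; simp)
    have hd1 : d + 1 ≤ (φ g).natDegree := Polynomial.le_natDegree_of_ne_zero hc
    have hdeg : (φ g).degree ≠ 0 := by
      rw [Polynomial.degree_eq_natDegree hne]
      intro h0
      have : (φ g).natDegree = 0 := by exact_mod_cast h0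
      omega
    obtain ⟨r, hr⟩ := IsAlgClosed.exists_root (φ g) hdeg
    refine ⟨![r, 1], ?_, ?_⟩
    · intro hz
      have := congrFun hz 1
      simp at this
    · rw [← φ_eval]; exact hr

lemma coprime_phi {f g : P2} {D : ℕ} (hf : f.IsHomogeneous D)
    (hf0 : f ≠ 0)
    (hcop : ∀ z : Fin 2 → ℂ, eval z f = 0 → eval z g = 0 → z = 0) :
    IsCoprime (φ f) (φ g) := by
  classical
  rw [← EuclideanDomain.gcd_isUnit_iff]
  by_contra hu
  have hF : φ f ≠ 0 := fun h => hf0 (φ_eq_zero hf h)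
  have hgcd0 : EuclideanDomain.gcd (φ f) (φ g) ≠ 0 := by
    intro h
    exact hF (EuclideanDomain.gcd_eq_zero_iff.mp h).1
  have hdeg : (EuclideanDomain.gcd (φ f) (φ g)).degree ≠ 0 := by
    intro h0
    exact hu (Polynomial.isUnit_iff_degree_eq_zero.mpr h0)
  obtain ⟨r, hr⟩ := IsAlgClosed.exists_root _ hdeg
  obtain ⟨qf, hqf⟩ := EuclideanDomain.gcd_dvd_left (φ f) (φ g)
  obtain ⟨qg, hqg⟩ := EuclideanDomain.gcd_dvd_right (φ f) (φ g)
  have hgcd : Polynomial.eval r (EuclideanDomain.gcd (φ f) (φ g)) = 0 := hr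
  have hzf : eval ![r, 1] f = 0 := by
    rw [← φ_eval, hqf, Polynomial.eval_mul, hgcd, zero_mul]
  have hzg : eval ![r, 1] g = 0 := by
    rw [← φ_eval, hqg, Polynomial.eval_mul, hgcd, zero_mul]
  have := congrFun (hcop _ hzf hzg) 1
  simp at this

lemma L1 {N k : ℕ} {f g A B : P2} (hf : f.IsHomogeneous (N + 1)) (hg : g.IsHomogeneous (N + 1))
    (hf0 : f ≠ 0) (hg0 : g ≠ 0)
    (hcop : ∀ z : Fin 2 → ℂ, eval z f = 0 → eval z g = 0 → z = 0)
    (hk : k ≤ N) (hA : A.IsHomogeneous k) (hB : B.IsHomogeneous k)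
    (h : f * A + g * B = 0) : A = 0 ∧ B = 0 := by
  have hco := coprime_phi hf hf0 hcop
  have hφ : φ f * φ A + φ g * φ B = 0 := by
    rw [← map_mul, ← map_mul, ← map_add, h, map_zero]
  have h10 : ¬(eval ![1, 0] f = 0 ∧ eval ![1, 0] g = 0) := by
    rintro ⟨h1, h2⟩
    have h3 := congrFun (hcop _ h1 h2) 0
    simp at h3
  rcases not_and_or.mp h10 with hc | hc
  · have hdF : N + 1 ≤ (φ f).natDegree :=
      Polynomial.le_natDegree_of_ne_zero (by rw [φ_coeff_top hf]; exact hc)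
    have hdvd : φ f ∣ φ B := by
      exact hco.dvd_of_dvd_mul_left ⟨-(φ A), by linear_combination hφ⟩
    have hB0 : B = 0 := by
      apply φ_eq_zero hB
      by_contra hB0
      have h1 := Polynomial.natDegree_le_of_dvd hdvd hB0
      have h2 := φ_natDegree hB
      omega
    refine ⟨?_, hB0⟩
    rw [hB0, mul_zero, add_zero] at h
    rcases mul_eq_zero.mp h with h' | h'
    · exact absurd h' hf0
    · exact h'
  · have hdG : N + 1 ≤ (φ g).natDegree :=
      Polynomial.le_natDegree_of_ne_zero (by rw [φ_coeff_top hg]; exact hc)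
    have hdvd : φ g ∣ φ A := by
      exact hco.symm.dvd_of_dvd_mul_left ⟨-(φ B), by linear_combination hφ⟩
    have hA0 : A = 0 := by
      apply φ_eq_zero hA
      by_contra hA0
      have h1 := Polynomial.natDegree_le_of_dvd hdvd hA0
      have h2 := φ_natDegree hA
      omega
    refine ⟨hA0, ?_⟩
    rw [hA0, mul_zero, zero_add] at h
    rcases mul_eq_zero.mp h with h' | h'
    · exact absurd h' hg0
    · exact h'

lemma sgl_one1 : (Finsupp.single 1 1 : Fin 2 →₀ ℕ) = sgl 0 1 := by
  ext i
  fin_cases i <;> simp [sgl_apply0, sgl_apply1, Finsupp.single_apply]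

lemma sgl_one0 : (Finsupp.single 0 1 : Fin 2 →₀ ℕ) = sgl 1 0 := by
  ext i
  fin_cases i <;> simp [sgl_apply0, sgl_apply1, Finsupp.single_apply]

lemma strip {a b : P2} {k : ℕ} (ha : a.IsHomogeneous k) (h : X 1 * a = X 0 * b) :
    ∃ α : P2, α.IsHomogeneous (k - 1) ∧ a = X 0 * α ∧ b = X 1 * α := by
  classical
  have hck : coeff (sgl 0 k) a = 0 := by
    have e1 : coeff (Finsupp.single 1 1 + sgl 0 k) (X 1 * a) = coeff (sgl 0 k) a :=
      coeff_X_mul _ _ _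
    have e2 : coeff (Finsupp.single 1 1 + sgl 0 k) (X 0 * b) = 0 := by
      rw [coeff_X_mul']
      rw [if_neg]
      intro hmem
      rw [sgl_one1, sgl_add, Finsupp.mem_support_iff, sgl_apply0] at hmem
      exact hmem rfl
    rw [← e1, h, e2]
  set α : P2 := ∑ j ∈ Finset.range k, monomial (sgl (k - 1 - j) j) (coeff (sgl (k - j) j) a)
    with hα_def
  have hα : α.IsHomogeneous (k - 1) := by
    apply IsHomogeneous.sum
    intro j hj
    exact isHomogeneous_sgl _ _ _ _ (by have := Finset.mem_range.mp hj; omega)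
  have ha' : a = X 0 * α := by
    rw [hα_def, Finset.mul_sum]
    conv_lhs => rw [homog_decomp ha]
    rw [Finset.sum_range_succ, Nat.sub_self, hck]
    simp only [monomial_zero, add_zero]
    apply Finset.sum_congr rfl
    intro j hj
    have hj' := Finset.mem_range.mp hj
    rw [X, monomial_mul, one_mul, sgl_one0, sgl_add, Nat.zero_add,
      show 1 + (k - 1 - j) = k - j by omega]
  refine ⟨α, hα, ha', ?_⟩
  apply mul_left_cancel₀ (X_ne_zero (R := ℂ) (0 : Fin 2))
  rw [← h, ha']
  ring

lemma descent {N : ℕ} {f g v : P2}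
    (hf : f.IsHomogeneous (N + 1)) (hg : g.IsHomogeneous (N + 1))
    (hf0 : f ≠ 0) (hg0 : g ≠ 0)
    (hcop : ∀ z : Fin 2 → ℂ, eval z f = 0 → eval z g = 0 → z = 0)
    (hv : v.IsHomogeneous N)
    (hD : ∀ w : P2, w.IsHomogeneous N → ∃ a b : P2, a.IsHomogeneous (N - 1) ∧
      b.IsHomogeneous (N - 1) ∧ v * w = f * a + g * b) : v = 0 := by
  have step : ∀ k : ℕ, k + 1 ≤ N →
      (∀ w, w.IsHomogeneous (k + 1) → ∃ a b : P2, a.IsHomogeneous k ∧ b.IsHomogeneous k ∧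
        v * w = f * a + g * b) →
      (∀ w, w.IsHomogeneous k → ∃ a b : P2, a.IsHomogeneous (k - 1) ∧
        b.IsHomogeneous (k - 1) ∧ v * w = f * a + g * b) := by
    intro k hk ih w hw
    have hw0 : (X 0 * w).IsHomogeneous (k + 1) := by
      have := (isHomogeneous_X ℂ (0 : Fin 2)).mul hw
      rwa [Nat.add_comm 1 k] at this
    have hw1 : (X 1 * w).IsHomogeneous (k + 1) := by
      have := (isHomogeneous_X ℂ (1 : Fin 2)).mul hw
      rwa [Nat.add_comm 1 k] at this
    obtain ⟨a₁, b₁, ha₁, hb₁, e₁⟩ := ih (X 0 * w) hw0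
    obtain ⟨a₂, b₂, ha₂, hb₂, e₂⟩ := ih (X 1 * w) hw1
    have hrel : f * (X 1 * a₁ - X 0 * a₂) + g * (X 1 * b₁ - X 0 * b₂) = 0 := by
      linear_combination (X 0 : P2) * e₂ - (X 1 : P2) * e₁
    have hA : (X 1 * a₁ - X 0 * a₂).IsHomogeneous (k + 1) := by
      have h1 := (isHomogeneous_X ℂ (1 : Fin 2)).mul ha₁
      have h2 := (isHomogeneous_X ℂ (0 : Fin 2)).mul ha₂
      rw [Nat.add_comm 1 k] at h1 h2
      exact h1.sub h2
    have hB : (X 1 * b₁ - X 0 * b₂).IsHomogeneous (k + 1) := by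
      have h1 := (isHomogeneous_X ℂ (1 : Fin 2)).mul hb₁
      have h2 := (isHomogeneous_X ℂ (0 : Fin 2)).mul hb₂
      rw [Nat.add_comm 1 k] at h1 h2
      exact h1.sub h2
    obtain ⟨hA0, hB0⟩ := L1 hf hg hf0 hg0 hcop hk hA hB hrel
    obtain ⟨α, hα, hα1, hα2⟩ := strip ha₁ (sub_eq_zero.mp hA0)
    obtain ⟨β, hβ, hβ1, hβ2⟩ := strip hb₁ (sub_eq_zero.mp hB0)
    refine ⟨α, β, hα, hβ, ?_⟩
    apply mul_left_cancel₀ (X_ne_zero (R := ℂ) (0 : Fin 2))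
    rw [hα1, hβ1] at e₁
    linear_combination e₁
  have key : ∀ j k : ℕ, k + j = N →
      ∀ w, w.IsHomogeneous k → ∃ a b : P2, a.IsHomogeneous (k - 1) ∧
        b.IsHomogeneous (k - 1) ∧ v * w = f * a + g * b := by
    intro j
    induction j with
    | zero =>
      intro k hk
      rw [Nat.add_zero] at hk
      subst hk
      exact hD
    | succ j ihj =>
      intro k hk
      apply step k (by omega)
      have := ihj (k + 1) (by omega)
      simpa using this
  obtain ⟨a, b, ha, hb, e⟩ := key N 0 (by omega) 1 (isHomogeneous_one (Fin 2) ℂ)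
  rw [mul_one] at e
  have hv' : v.IsHomogeneous (N + 1) := by
    rw [e]
    have h3 := (hf.mul ha).add (hg.mul hb)
    simpa using h3
  exact eq_zero_of_two_degrees hv hv' (by omega)

/-- coordinates of a homogeneous binary form of degree `d` -/
noncomputable def homogEquiv (d : ℕ) :
    (homogeneousSubmodule (Fin 2) ℂ d) ≃ₗ[ℂ] (Fin (d + 1) → ℂ) where
  toFun p := fun j => coeff (sgl (d - j.1) j.1) (p : P2)
  map_add' p q := by
    funext j
    simp [coeff_add]
  map_smul' r p := by
    funext j
    simp
  invFun c := ⟨∑ j : Fin (d + 1), monomial (sgl (d - j.1) j.1) (c j),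
    Submodule.sum_mem _ fun j _ =>
      ((mem_homogeneousSubmodule _ _).mpr
        (isHomogeneous_sgl _ _ _ _ (by have := j.isLt; omega)))⟩
  left_inv p := by
    apply Subtype.ext
    simp only
    have hp : (p : P2).IsHomogeneous d := (mem_homogeneousSubmodule _ _).mp p.2
    conv_rhs => rw [homog_decomp hp]
    rw [← Fin.sum_univ_eq_sum_range
      (fun j => monomial (sgl (d - j) j) (coeff (sgl (d - j) j) (p : P2))) (d + 1)]
  right_inv c := by
    funext j
    simp only [coeff_sum]
    rw [Finset.sum_eq_single j]
    · rw [coeff_monomial, if_pos rfl]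
    · intro b _ hbj
      rw [coeff_monomial, if_neg]
      intro h
      exact hbj (Fin.ext (sgl_inj h).2)
    · intro h
      exact absurd (Finset.mem_univ j) h

instance homogFin (d : ℕ) : FiniteDimensional ℂ (homogeneousSubmodule (Fin 2) ℂ d) :=
  Module.Finite.equiv (homogEquiv d).symm

lemma finrank_homog (d : ℕ) :
    Module.finrank ℂ (homogeneousSubmodule (Fin 2) ℂ d) = d + 1 := by
  rw [(homogEquiv d).finrank_eq, Module.finrank_fin_fun]

lemma coeff_binomial_pow {Aq : Type*} [CommRing Aq] (e0 e1 : Aq) (M a b : ℕ) (hab : a + b = M) :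
    MvPolynomial.coeff (sgl a b) ((C e0 * X 0 + C e1 * X 1 : MvPolynomial (Fin 2) Aq) ^ M)
      = (M.choose a : Aq) * (e0 ^ a * e1 ^ b) := by
  rw [add_pow]
  have hterm : ∀ k : ℕ,
      (C e0 * X 0) ^ k * (C e1 * X 1) ^ (M - k) * ((M.choose k : ℕ) : MvPolynomial (Fin 2) Aq)
      = monomial (sgl k (M - k)) ((M.choose k : Aq) * (e0 ^ k * e1 ^ (M - k))) := by
    intro k
    rw [mul_pow, mul_pow, ← C_pow, ← C_pow, X_pow_eq_monomial, X_pow_eq_monomial,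
      ← C_eq_coe_nat, C_mul_monomial, C_mul_monomial, monomial_mul,
      mul_comm (monomial _ _) (C _), C_mul_monomial]
    rw [show Finsupp.single (0 : Fin 2) k + Finsupp.single (1 : Fin 2) (M - k) = sgl k (M - k)
      from rfl]
    congr 1
    ring
  rw [Finset.sum_congr rfl fun k _ => hterm k, coeff_sum]
  rw [Finset.sum_eq_single a]
  · rw [coeff_monomial, if_pos (by rw [show M - a = b by omega])]
    rw [show M - a = b by omega]
  · intro k hk hka
    rw [coeff_monomial, if_neg]
    intro h
    exact hka (sgl_inj h).1
  · intro h
    exact absurd (Finset.mem_range.mpr (by omega)) h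

lemma coeffMap_coeff {n : ℕ} {Aring : Type*} [CommRing Aring] (ρ : Aring → ℂ) (h0 : ρ 0 = 0)
    (p : MvPolynomial (Fin n) Aring) (d : Fin n →₀ ℕ) :
    (coeffMap ρ p).coeff d = ρ (p.coeff d) := by
  rw [coeffMap, coeff_sum]
  by_cases hd : d ∈ p.support
  · rw [Finset.sum_eq_single d]
    · rw [coeff_monomial, if_pos rfl]
    · intro b _ hbd
      rw [coeff_monomial, if_neg hbd]
    · intro h
      exact absurd hd h
  · rw [MvPolynomial.notMem_support_iff.mp hd, h0, Finset.sum_eq_zero]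
    intro b hb
    rw [coeff_monomial, if_neg]
    intro h
    exact hd (h ▸ hb)

end CatAux

open CatAux in
/-- For every non-degenerate binary form `Q` of degree `m ≥ 3`, the
catalecticant of its associated form `𝐐 ∈ 𝒬_2^{2(m-2)}` does not vanish. -/
theorem catalecticant_assocForm_ne_zero
    (m : ℕ) (hm : 3 ≤ m) (Q A : MvPolynomial (Fin 2) ℂ)
    (hQ : Q.IsHomogeneous m) (hnd : Nondegenerate Q)
    (hA : IsAssocForm 2 m Q A) :
    catalecticant (m - 2) A ≠ 0 := by
  classical
  intro hcat
  obtain ⟨ω, hω1, -, hA3⟩ := hA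
  set N := m - 2 with hNdef
  have hN1 : 1 ≤ N := by omega
  set Lq : MvPolynomial (Fin 2) ℂ →ₗ[ℂ] ℂ :=
    ω.comp (Ideal.Quotient.mkₐ ℂ (jacobianIdeal Q)).toLinearMap with hLqdef
  have hLq : ∀ p : MvPolynomial (Fin 2) ℂ,
      Lq p = ω (Ideal.Quotient.mk (jacobianIdeal Q) p) := fun p => rfl
  set f := pderiv (0 : Fin 2) Q with hf_def
  set g := pderiv (1 : Fin 2) Q with hg_def
  have hfh : f.IsHomogeneous (N + 1) := by
    have := pderiv_isHomogeneous hQ 0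
    rwa [show m - 1 = N + 1 by omega] at this
  have hgh : g.IsHomogeneous (N + 1) := by
    have := pderiv_isHomogeneous hQ 1
    rwa [show m - 1 = N + 1 by omega] at this
  have hcop : ∀ z : Fin 2 → ℂ, eval z f = 0 → eval z g = 0 → z = 0 := by
    intro z h0 h1
    apply hnd
    intro i
    fin_cases i
    · exact h0
    · exact h1
  have hf0 : f ≠ 0 := by
    intro h0
    obtain ⟨z, hz, hzg⟩ := exists_nontrivial_zero hgh
    exact hz (hcop z (by rw [h0]; simp) hzg)
  have hg0 : g ≠ 0 := by
    intro h0
    obtain ⟨z, hz, hzf⟩ := exists_nontrivial_zero hfh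
    exact hz (hcop z hzf (by rw [h0]; simp))
  have hLf : ∀ p : MvPolynomial (Fin 2) ℂ, Lq (f * p) = 0 := by
    intro p
    have hmem : f * p ∈ jacobianIdeal Q := by
      unfold jacobianIdeal
      exact Ideal.mul_mem_right _ _ (Ideal.subset_span ⟨0, rfl⟩)
    rw [hLq, Ideal.Quotient.eq_zero_iff_mem.mpr hmem, map_zero]
  have hLg : ∀ p : MvPolynomial (Fin 2) ℂ, Lq (g * p) = 0 := by
    intro p
    have hmem : g * p ∈ jacobianIdeal Q := by
      unfold jacobianIdeal
      exact Ideal.mul_mem_right _ _ (Ideal.subset_span ⟨1, rfl⟩)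
    rw [hLq, Ideal.Quotient.eq_zero_iff_mem.mpr hmem, map_zero]
  -- the coefficients of the associated form
  have hAcoeff : ∀ a b : ℕ, a + b = 2 * N →
      A.coeff (sgl a b) = (((2 * N).choose b : ℕ) : ℂ) * Lq (monomial (sgl a b) 1) := by
    intro a b hab
    rw [hA3, coeffMap_coeff _ (map_zero ω)]
    have hsum2 : (∑ i : Fin 2, C (Ideal.Quotient.mk (jacobianIdeal Q) (X i)) * X i) =
        C (Ideal.Quotient.mk (jacobianIdeal Q) (X 0)) * X 0 + C (Ideal.Quotient.mk (jacobianIdeal Q) (X 1)) * X 1 :=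
      Fin.sum_univ_two _
    rw [hsum2, coeff_binomial_pow _ _ _ _ _ hab]
    have hmono : (Ideal.Quotient.mk (jacobianIdeal Q) (X 0)) ^ a * (Ideal.Quotient.mk (jacobianIdeal Q) (X 1)) ^ b
        = Ideal.Quotient.mk (jacobianIdeal Q) (monomial (sgl a b) 1) := by
      rw [← map_pow, ← map_pow, ← map_mul]
      congr 1
      rw [X_pow_eq_monomial, X_pow_eq_monomial, monomial_mul, one_mul]
      rfl
    rw [hmono]
    have hnsmul : ((((2 * N).choose a : ℕ)) : MvPolynomial (Fin 2) ℂ ⧸ jacobianIdeal Q) *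
        Ideal.Quotient.mk (jacobianIdeal Q) (monomial (sgl a b) 1)
        = ((2 * N).choose a : ℕ) • Ideal.Quotient.mk (jacobianIdeal Q) (monomial (sgl a b) 1) := by
      rw [nsmul_eq_mul]
    rw [hnsmul, map_nsmul, nsmul_eq_mul, hLq]
    congr 2
    rw [show a = 2 * N - b by omega, Nat.choose_symm (by omega)]
  -- kernel vector of the catalecticant matrix
  rw [catalecticant] at hcat
  obtain ⟨c, hc0, hker⟩ := Matrix.exists_mulVec_eq_zero_iff.mpr hcat
  have hentry : ∀ i j : Fin (N + 1),
      (Matrix.of fun i j : Fin (N + 1) =>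
        A.coeff (Finsupp.single 0 (2 * N - (i.1 + j.1)) + Finsupp.single 1 (i.1 + j.1)) /
          (Nat.choose (2 * N) (i.1 + j.1) : ℂ)) i j
      = Lq (monomial (sgl (2 * N - (i.1 + j.1)) (i.1 + j.1)) 1) := by
    intro i j
    have hij : i.1 + j.1 ≤ 2 * N := by have := i.isLt; have := j.isLt; omega
    have hch : ((Nat.choose (2 * N) (i.1 + j.1) : ℕ) : ℂ) ≠ 0 :=
      Nat.cast_ne_zero.mpr (Nat.choose_pos hij).ne'
    rw [Matrix.of_apply,
      show Finsupp.single (0 : Fin 2) (2 * N - (i.1 + j.1)) +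
        Finsupp.single (1 : Fin 2) (i.1 + j.1) = sgl (2 * N - (i.1 + j.1)) (i.1 + j.1) from rfl,
      hAcoeff _ _ (by omega), mul_div_cancel_left₀ _ hch]
  -- the form coming from the kernel vector
  set v : MvPolynomial (Fin 2) ℂ :=
    ∑ j : Fin (N + 1), monomial (sgl (N - j.1) j.1) (c j) with hv_def
  have hvh : v.IsHomogeneous N := by
    apply IsHomogeneous.sum
    intro j _
    exact isHomogeneous_sgl _ _ _ _ (by have := j.isLt; omega)
  have hvne : v ≠ 0 := by
    obtain ⟨j₀, hj₀⟩ := Function.ne_iff.mp hc0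
    intro hv0
    apply hj₀
    have hcoeff : coeff (sgl (N - j₀.1) j₀.1) v = c j₀ := by
      rw [hv_def, coeff_sum, Finset.sum_eq_single j₀]
      · rw [coeff_monomial, if_pos rfl]
      · intro b _ hbj
        rw [coeff_monomial, if_neg]
        intro h
        exact hbj (Fin.ext (sgl_inj h).2)
      · intro h
        exact absurd (Finset.mem_univ j₀) h
    rw [← hcoeff, hv0]
    simp
  have hmonov : ∀ i : Fin (N + 1), Lq (v * monomial (sgl (N - i.1) i.1) 1) = 0 := by
    intro i
    have hexp : v * monomial (sgl (N - i.1) i.1) 1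
        = ∑ j : Fin (N + 1), monomial (sgl (2 * N - (i.1 + j.1)) (i.1 + j.1)) (c j) := by
      rw [hv_def, Finset.sum_mul]
      apply Finset.sum_congr rfl
      intro j _
      rw [monomial_mul, mul_one, sgl_add,
        show N - j.1 + (N - i.1) = 2 * N - (i.1 + j.1) by
          have := i.isLt; have := j.isLt; omega,
        show j.1 + i.1 = i.1 + j.1 by omega]
    rw [hexp, map_sum]
    have hki := congrFun hker i
    simp only [Matrix.mulVec, dotProduct, Pi.zero_apply] at hki
    rw [← hki]
    apply Finset.sum_congr rfl
    intro j _
    rw [show monomial (sgl (2 * N - (i.1 + j.1)) (i.1 + j.1)) (c j)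
        = c j • monomial (sgl (2 * N - (i.1 + j.1)) (i.1 + j.1)) (1 : ℂ) by
      rw [smul_monomial, smul_eq_mul, mul_one], map_smul, smul_eq_mul, hentry i j]
    ring
  have hall : ∀ w : MvPolynomial (Fin 2) ℂ, w.IsHomogeneous N → Lq (v * w) = 0 := by
    intro w hw
    conv_lhs => rw [homog_decomp hw]
    rw [Finset.mul_sum, map_sum]
    apply Finset.sum_eq_zero
    intro j hj
    have hjlt : j < N + 1 := Finset.mem_range.mp hj
    rw [show monomial (sgl (N - j) j) (coeff (sgl (N - j) j) w)
        = coeff (sgl (N - j) j) w • monomial (sgl (N - j) j) (1 : ℂ) by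
      rw [smul_monomial, smul_eq_mul, mul_one], mul_smul_comm, map_smul,
      hmonov ⟨j, hjlt⟩, smul_zero]
  -- the subspace f·P_{N-1} + g·P_{N-1}
  set H' := homogeneousSubmodule (Fin 2) ℂ (N - 1) with hH'def
  set T : (H' × H') →ₗ[ℂ] MvPolynomial (Fin 2) ℂ :=
    { toFun := fun pq =>
        f * (pq.1 : MvPolynomial (Fin 2) ℂ) + g * (pq.2 : MvPolynomial (Fin 2) ℂ)
      map_add' := by
        intro x y
        simp only [Submodule.coe_add, Prod.fst_add, Prod.snd_add]
        ring
      map_smul' := by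
        intro r x
        simp only [Submodule.coe_smul, Prod.smul_fst, Prod.smul_snd, RingHom.id_apply]
        rw [smul_eq_C_mul, smul_eq_C_mul, smul_eq_C_mul]
        ring } with hTdef
  have hTval : ∀ pq : H' × H',
      T pq = f * (pq.1 : MvPolynomial (Fin 2) ℂ) + g * (pq.2 : MvPolynomial (Fin 2) ℂ) :=
    fun pq => rfl
  have hTinj : Function.Injective T := by
    rw [← LinearMap.ker_eq_bot, LinearMap.ker_eq_bot']
    intro pq hpq
    have h1 : (pq.1 : MvPolynomial (Fin 2) ℂ).IsHomogeneous (N - 1) :=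
      (mem_homogeneousSubmodule _ _).mp pq.1.2
    have h2 : (pq.2 : MvPolynomial (Fin 2) ℂ).IsHomogeneous (N - 1) :=
      (mem_homogeneousSubmodule _ _).mp pq.2.2
    have hpq' : f * (pq.1 : MvPolynomial (Fin 2) ℂ) +
        g * (pq.2 : MvPolynomial (Fin 2) ℂ) = 0 := by
      rw [← hTval pq]; exact hpq
    obtain ⟨hz1, hz2⟩ := L1 hfh hgh hf0 hg0 hcop (by omega : N - 1 ≤ N) h1 h2 hpq'
    have e1 : pq.1 = 0 := Subtype.ext hz1
    have e2 : pq.2 = 0 := Subtype.ext hz2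
    rw [Prod.ext_iff]
    exact ⟨e1, e2⟩
  by_cases hcase : ∀ w : MvPolynomial (Fin 2) ℂ, w.IsHomogeneous N →
      v * w ∈ LinearMap.range T
  · apply hvne
    apply descent hfh hgh hf0 hg0 hcop hvh
    intro w hw
    obtain ⟨⟨p, q⟩, hpq⟩ := hcase w hw
    refine ⟨p, q, (mem_homogeneousSubmodule _ _).mp p.2,
      (mem_homogeneousSubmodule _ _).mp q.2, ?_⟩
    rw [← hTval ⟨p, q⟩]
    exact hpq.symm
  · push_neg at hcase
    obtain ⟨w, hw, hnotin⟩ := hcase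
    have hu0 : v * w ≠ 0 := fun h => hnotin (h ▸ (LinearMap.range T).zero_mem)
    have huh : (v * w).IsHomogeneous (2 * N) := by
      have := hvh.mul hw
      rwa [← two_mul] at this
    have hWle : LinearMap.range T ≤ homogeneousSubmodule (Fin 2) ℂ (2 * N) := by
      rintro x ⟨⟨p, q⟩, rfl⟩
      rw [hTval ⟨p, q⟩, mem_homogeneousSubmodule]
      have h1 := hfh.mul ((mem_homogeneousSubmodule _ _).mp p.2)
      have h2 := hgh.mul ((mem_homogeneousSubmodule _ _).mp q.2)
      rw [show N + 1 + (N - 1) = 2 * N by omega] at h1 h2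
      exact h1.add h2
    have hfrW : Module.finrank ℂ (LinearMap.range T) = 2 * N := by
      rw [LinearMap.finrank_range_of_inj hTinj, Module.finrank_prod, hH'def, finrank_homog]
      omega
    have hdisj : LinearMap.range T ⊓ (ℂ ∙ (v * w)) = ⊥ := by
      rw [Submodule.eq_bot_iff]
      rintro x ⟨hxW, hxS⟩
      obtain ⟨r, rfl⟩ := Submodule.mem_span_singleton.mp hxS
      rcases eq_or_ne r 0 with hr | hr
      · rw [hr, zero_smul]
      · exfalso
        apply hnotin
        have := Submodule.smul_mem (LinearMap.range T) r⁻¹ hxW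
        rwa [smul_smul, inv_mul_cancel₀ hr, one_smul] at this
    have hVeq : LinearMap.range T ⊔ (ℂ ∙ (v * w)) = homogeneousSubmodule (Fin 2) ℂ (2 * N) := by
      apply Submodule.eq_of_le_of_finrank_le
      · apply sup_le hWle
        rw [Submodule.span_singleton_le_iff_mem]
        exact (mem_homogeneousSubmodule _ _).mpr huh
      · rw [finrank_homog]
        have hsum := Submodule.finrank_sup_add_finrank_inf_eq (LinearMap.range T) (ℂ ∙ (v * w))
        rw [hdisj, finrank_bot, hfrW, finrank_span_singleton hu0] at hsum
        omega
    have hhessh : (hess Q).IsHomogeneous (2 * N) := by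
      rw [hess, Matrix.det_fin_two]
      simp only [Matrix.of_apply]
      have h00 := pderiv_isHomogeneous (pderiv_isHomogeneous hQ 0) 0
      have h01 := pderiv_isHomogeneous (pderiv_isHomogeneous hQ 1) 0
      have h10 := pderiv_isHomogeneous (pderiv_isHomogeneous hQ 0) 1
      have h11 := pderiv_isHomogeneous (pderiv_isHomogeneous hQ 1) 1
      rw [show m - 1 - 1 = N by omega] at h00 h01 h10 h11
      have hdet := (h00.mul h11).sub (h01.mul h10)
      rwa [← two_mul] at hdet
    have hmemsup : hess Q ∈ LinearMap.range T ⊔ (ℂ ∙ (v * w)) := by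
      rw [hVeq]
      exact (mem_homogeneousSubmodule _ _).mpr hhessh
    obtain ⟨x, hx, y, hy, hxy⟩ := Submodule.mem_sup.mp hmemsup
    obtain ⟨⟨p, q⟩, rfl⟩ := hx
    obtain ⟨r, rfl⟩ := Submodule.mem_span_singleton.mp hy
    have hLhess : Lq (hess Q) = 0 := by
      rw [← hxy, map_add, map_smul]
      have hT0 : Lq (T (p, q)) = 0 := by
        rw [hTval ⟨p, q⟩, map_add, hLf, hLg, add_zero]
      rw [hT0, hall w hw, smul_zero, add_zero]
    have h1 : (1 : ℂ) = 0 := by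
      rw [← hω1, ← hLq, hLhess]
    exact one_ne_zero h1
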